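/- The minimum over Y ∈ R^{m×T} of ‖σ X^T C_x^{-1} X − X^T X − Y^T Y‖_F^2 is attained at Y = W X where the rows of W ∈ R^{m×n} form a suitably scaled basis of the minor subspace of C_x (the span of eigenvectors of C_x corresponding to its m smallest eigenvalues), assuming σ exceeds the largest eigenvalue of X^T X divided by T and C_x has distinct eigenvalues. -/

import Mathlib

open Matrix


lemma dp_sum_left {ι : Type*} [Fintype ι] {N : ℕ} (f : ι → Fin N → ℝ) (v : Fin N → ℝ) :
    (∑ i, f i) ⬝ᵥ v = ∑ i, f i ⬝ᵥ v := by
  simp only [dotProduct, Finset.sum_apply, Finset.sum_mul]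
  exact Finset.sum_comm

lemma dp_sum_right {ι : Type*} [Fintype ι] {N : ℕ} (f : ι → Fin N → ℝ) (v : Fin N → ℝ) :
    v ⬝ᵥ (∑ i, f i) = ∑ i, v ⬝ᵥ f i := by
  simp only [dotProduct, Finset.sum_apply, Finset.mul_sum]
  exact Finset.sum_comm

lemma bessel_div {ι : Type*} [Fintype ι] {N : ℕ} (w : ι → Fin N → ℝ)
    (hw : ∀ i j, i ≠ j → w i ⬝ᵥ w j = 0) (v : Fin N → ℝ) :
    (∑ i, if w i ⬝ᵥ w i = 0 then (0:ℝ) else (w i ⬝ᵥ v)^2 / (w i ⬝ᵥ w i)) ≤ v ⬝ᵥ v := by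
  classical
  set coef : ι → ℝ := fun i => if w i ⬝ᵥ w i = 0 then 0 else (w i ⬝ᵥ v) / (w i ⬝ᵥ w i) with hcoef
  set r : Fin N → ℝ := v - ∑ i, coef i • w i with hr
  have hrr : 0 ≤ r ⬝ᵥ r := by
    have : r ⬝ᵥ r = ∑ t, r t * r t := rfl
    rw [this]
    exact Finset.sum_nonneg fun t _ => mul_self_nonneg _
  have h1 : v ⬝ᵥ (∑ i, coef i • w i) = ∑ i, coef i * (w i ⬝ᵥ v) := by
    rw [dp_sum_right]
    exact Finset.sum_congr rfl fun i _ => by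
      rw [dotProduct_smul, smul_eq_mul, dotProduct_comm]
  have h2 : (∑ i, coef i • w i) ⬝ᵥ v = ∑ i, coef i * (w i ⬝ᵥ v) := by
    rw [dp_sum_left]
    exact Finset.sum_congr rfl fun i _ => by rw [smul_dotProduct, smul_eq_mul]
  have h3 : (∑ i, coef i • w i) ⬝ᵥ (∑ i, coef i • w i) =
      ∑ i, coef i * coef i * (w i ⬝ᵥ w i) := by
    rw [dp_sum_left]
    refine Finset.sum_congr rfl fun i _ => ?_
    rw [smul_dotProduct, dp_sum_right, smul_eq_mul]
    have : ∑ j, w i ⬝ᵥ coef j • w j = coef i * (w i ⬝ᵥ w i) := by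
      rw [Finset.sum_eq_single i]
      · rw [dotProduct_smul, smul_eq_mul]
      · intro j _ hj
        rw [dotProduct_smul, hw i j (Ne.symm hj), smul_zero]
      · simp
    rw [this]; ring
  have hexp : r ⬝ᵥ r = v ⬝ᵥ v - 2 * (∑ i, coef i * (w i ⬝ᵥ v)) +
      ∑ i, coef i * coef i * (w i ⬝ᵥ w i) := by
    rw [hr, sub_dotProduct, dotProduct_sub, dotProduct_sub, h1, h2, h3]; ring
  have hterm : ∀ i : ι, coef i * (w i ⬝ᵥ v) =
      (if w i ⬝ᵥ w i = 0 then (0:ℝ) else (w i ⬝ᵥ v)^2 / (w i ⬝ᵥ w i)) ∧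
      coef i * coef i * (w i ⬝ᵥ w i) =
      (if w i ⬝ᵥ w i = 0 then (0:ℝ) else (w i ⬝ᵥ v)^2 / (w i ⬝ᵥ w i)) := by
    intro i
    by_cases h : w i ⬝ᵥ w i = 0
    · simp [hcoef, h]
    · constructor
      · simp only [hcoef, if_neg h]; field_simp
      · simp only [hcoef, if_neg h]; field_simp
  have hs1 : (∑ i, coef i * (w i ⬝ᵥ v)) =
      ∑ i, (if w i ⬝ᵥ w i = 0 then (0:ℝ) else (w i ⬝ᵥ v)^2 / (w i ⬝ᵥ w i)) :=
    Finset.sum_congr rfl fun i _ => (hterm i).1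
  have hs2 : (∑ i, coef i * coef i * (w i ⬝ᵥ w i)) =
      ∑ i, (if w i ⬝ᵥ w i = 0 then (0:ℝ) else (w i ⬝ᵥ v)^2 / (w i ⬝ᵥ w i)) :=
    Finset.sum_congr rfl fun i _ => (hterm i).2
  rw [hexp, hs1, hs2] at hrr
  linarith


lemma frob_diag {n T : ℕ} (p : Fin n → Fin T → ℝ) (ν : Fin n → ℝ)
    (hp : ∀ k l, p k ⬝ᵥ p l = if k = l then ν k else 0) (c : Fin n → ℝ) :
    ∑ a : Fin T, ∑ b : Fin T, (∑ k, c k * p k a * p k b)^2 = ∑ k, (c k)^2 * (ν k)^2 := by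
  classical
  calc ∑ a : Fin T, ∑ b : Fin T, (∑ k, c k * p k a * p k b)^2
      = ∑ ab : Fin T × Fin T, (∑ k, c k * p k ab.1 * p k ab.2)^2 := by
        rw [Fintype.sum_prod_type]
    _ = ∑ ab : Fin T × Fin T, ∑ kl : Fin n × Fin n,
          (c kl.1 * p kl.1 ab.1 * p kl.1 ab.2) * (c kl.2 * p kl.2 ab.1 * p kl.2 ab.2) := by
        refine Finset.sum_congr rfl fun ab _ => ?_
        rw [sq, Finset.sum_mul_sum]
        exact (Fintype.sum_prod_type (f := fun kl : Fin n × Fin n =>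
          (c kl.1 * p kl.1 ab.1 * p kl.1 ab.2) * (c kl.2 * p kl.2 ab.1 * p kl.2 ab.2))).symm
    _ = ∑ kl : Fin n × Fin n, ∑ ab : Fin T × Fin T,
          (c kl.1 * p kl.1 ab.1 * p kl.1 ab.2) * (c kl.2 * p kl.2 ab.1 * p kl.2 ab.2) :=
        Finset.sum_comm
    _ = ∑ kl : Fin n × Fin n, c kl.1 * c kl.2 * ((p kl.1 ⬝ᵥ p kl.2) * (p kl.1 ⬝ᵥ p kl.2)) := by
        refine Finset.sum_congr rfl fun kl _ => ?_
        have expand : c kl.1 * c kl.2 * ((p kl.1 ⬝ᵥ p kl.2) * (p kl.1 ⬝ᵥ p kl.2)) =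
            ∑ a : Fin T, ∑ b : Fin T,
              (c kl.1 * p kl.1 a * p kl.1 b) * (c kl.2 * p kl.2 a * p kl.2 b) := by
          unfold dotProduct
          rw [Finset.sum_mul_sum, Finset.mul_sum]
          refine Finset.sum_congr rfl fun a _ => ?_
          rw [Finset.mul_sum]
          exact Finset.sum_congr rfl fun b _ => by ring
        rw [expand, Fintype.sum_prod_type]
    _ = ∑ k, (c k)^2 * (ν k)^2 := by
        rw [Fintype.sum_prod_type]
        refine Finset.sum_congr rfl fun k _ => ?_
        rw [Finset.sum_eq_single k]
        · rw [hp k k, if_pos rfl]; ring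
        · intro l _ hl
          rw [hp k l, if_neg (fun h => hl h.symm)]
          ring
        · simp

lemma card_top {n m : ℕ} (hm : m ≤ n) :
    (Finset.univ.filter (fun k : Fin n => n - m ≤ (k : ℕ))).card = m := by
  classical
  have h := Finset.card_bij' (s := Finset.univ.filter (fun k : Fin n => n - m ≤ (k : ℕ)))
    (t := (Finset.univ : Finset (Fin m)))
    (i := fun k hk => ⟨(k : ℕ) - (n - m), by
      have hk' := (Finset.mem_filter.mp hk).2
      have := k.isLt
      omega⟩)
    (j := fun i hi => ⟨n - m + (i : ℕ), by have := i.isLt; omega⟩)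
    (by intro a ha; exact Finset.mem_univ _)
    (by intro a ha
        refine Finset.mem_filter.mpr ⟨Finset.mem_univ _, ?_⟩
        simp)
    (by intro a ha
        have hk' := (Finset.mem_filter.mp ha).2
        apply Fin.ext
        simp
        omega)
    (by intro a ha
        apply Fin.ext
        simp)
  rw [h, Finset.card_univ, Fintype.card_fin]

lemma lp_bound {n m : ℕ} (hm : m ≤ n) (w e : Fin n → ℝ) (hw0 : ∀ k, 0 ≤ w k)
    (hwmono : Monotone w) (he0 : ∀ k, 0 ≤ e k) (he1 : ∀ k, e k ≤ 1)
    (hesum : ∑ k, e k ≤ m) :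
    ∑ k, w k * e k ≤ ∑ k ∈ Finset.univ.filter (fun k : Fin n => n - m ≤ (k : ℕ)), w k := by
  classical
  rcases Nat.eq_zero_or_pos m with hm0 | hm0
  · subst hm0
    have hsum0 : ∑ k, e k = 0 := le_antisymm (by simpa using hesum)
      (Finset.sum_nonneg fun k _ => he0 k)
    have he : ∀ k, e k = 0 := fun k =>
      (Finset.sum_eq_zero_iff_of_nonneg fun k _ => he0 k).mp hsum0 k (Finset.mem_univ k)
    have : ∑ k, w k * e k = 0 := Finset.sum_eq_zero fun k _ => by rw [he k, mul_zero]
    rw [this]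
    exact Finset.sum_nonneg fun k _ => hw0 k
  · have hnm : n - m < n := by omega
    set k₀ : Fin n := ⟨n - m, hnm⟩ with hk₀
    set t := w k₀ with ht
    have htn : 0 ≤ t := hw0 k₀
    have hlow : ∀ k : Fin n, ¬ (n - m ≤ (k : ℕ)) → w k ≤ t := by
      intro k hk
      exact hwmono (show k ≤ k₀ by exact Fin.le_def.mpr (by simp [hk₀]; omega))
    have hhigh : ∀ k : Fin n, n - m ≤ (k : ℕ) → t ≤ w k := by
      intro k hk
      exact hwmono (show k₀ ≤ k by exact Fin.le_def.mpr (by simp [hk₀]; omega))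
    set P : Fin n → Prop := fun k => n - m ≤ (k : ℕ) with hP
    set Top := Finset.univ.filter P with hTop
    set Low := Finset.univ.filter (fun k => ¬ P k) with hLow
    have hsplit : ∀ f : Fin n → ℝ, ∑ k, f k = ∑ k ∈ Top, f k + ∑ k ∈ Low, f k := by
      intro f
      rw [hTop, hLow, Finset.sum_filter_add_sum_filter_not]
    have hcard : Top.card = m := card_top hm
    have h1 : ∑ k ∈ Low, w k * e k ≤ t * ∑ k ∈ Low, e k := by
      rw [Finset.mul_sum]
      refine Finset.sum_le_sum fun k hk => ?_
      have hk' : ¬ P k := (Finset.mem_filter.mp hk).2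
      exact mul_le_mul_of_nonneg_right (hlow k hk') (he0 k)
    have h2 : ∑ k ∈ Top, w k * e k ≤ ∑ k ∈ Top, w k - t * ((m : ℝ) - ∑ k ∈ Top, e k) := by
      have step : ∀ k ∈ Top, w k * e k ≤ w k - t * (1 - e k) := by
        intro k hk
        have hk' : P k := (Finset.mem_filter.mp hk).2
        have h := hhigh k hk'
        nlinarith [he1 k, he0 k]
      calc ∑ k ∈ Top, w k * e k ≤ ∑ k ∈ Top, (w k - t * (1 - e k)) :=
            Finset.sum_le_sum step
        _ = ∑ k ∈ Top, w k - t * ((m : ℝ) - ∑ k ∈ Top, e k) := by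
            rw [Finset.sum_sub_distrib]
            have : ∑ x ∈ Top, t * (1 - e x) = t * (m : ℝ) - t * ∑ x ∈ Top, e x := by
              simp only [mul_sub, mul_one]
              rw [Finset.sum_sub_distrib, Finset.sum_const, hcard, nsmul_eq_mul,
                ← Finset.mul_sum]
              ring
            rw [this]
            ring
    have hE : ∑ k ∈ Top, e k + ∑ k ∈ Low, e k ≤ (m : ℝ) := by
      rw [← hsplit]; exact hesum
    have := hsplit (fun k => w k * e k)
    nlinarith [h1, h2, hE, htn]

lemma frob_cross {n m T : ℕ} (p : Fin n → Fin T → ℝ) (z : Fin m → Fin T → ℝ)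
    (c : Fin n → ℝ) :
    ∑ a : Fin T, ∑ b : Fin T, (∑ k, c k * p k a * p k b) * (∑ j, z j a * z j b) =
      ∑ k, c k * ∑ j, (p k ⬝ᵥ z j)^2 := by
  classical
  calc ∑ a : Fin T, ∑ b : Fin T, (∑ k, c k * p k a * p k b) * (∑ j, z j a * z j b)
      = ∑ ab : Fin T × Fin T, (∑ k, c k * p k ab.1 * p k ab.2) * (∑ j, z j ab.1 * z j ab.2) := by
        rw [Fintype.sum_prod_type]
    _ = ∑ ab : Fin T × Fin T, ∑ kj : Fin n × Fin m,
          (c kj.1 * p kj.1 ab.1 * p kj.1 ab.2) * (z kj.2 ab.1 * z kj.2 ab.2) := by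
        refine Finset.sum_congr rfl fun ab _ => ?_
        rw [Finset.sum_mul_sum]
        exact (Fintype.sum_prod_type (f := fun kj : Fin n × Fin m =>
          (c kj.1 * p kj.1 ab.1 * p kj.1 ab.2) * (z kj.2 ab.1 * z kj.2 ab.2))).symm
    _ = ∑ kj : Fin n × Fin m, ∑ ab : Fin T × Fin T,
          (c kj.1 * p kj.1 ab.1 * p kj.1 ab.2) * (z kj.2 ab.1 * z kj.2 ab.2) :=
        Finset.sum_comm
    _ = ∑ kj : Fin n × Fin m, c kj.1 * ((p kj.1 ⬝ᵥ z kj.2) * (p kj.1 ⬝ᵥ z kj.2)) := by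
        refine Finset.sum_congr rfl fun kj _ => ?_
        have expand : c kj.1 * ((p kj.1 ⬝ᵥ z kj.2) * (p kj.1 ⬝ᵥ z kj.2)) =
            ∑ a : Fin T, ∑ b : Fin T,
              (c kj.1 * p kj.1 a * p kj.1 b) * (z kj.2 a * z kj.2 b) := by
          unfold dotProduct
          rw [Finset.sum_mul_sum, Finset.mul_sum]
          refine Finset.sum_congr rfl fun a _ => ?_
          rw [Finset.mul_sum]
          exact Finset.sum_congr rfl fun b _ => by ring
        rw [expand, Fintype.sum_prod_type]
    _ = ∑ k, c k * ∑ j, (p k ⬝ᵥ z j)^2 := by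
        rw [Fintype.sum_prod_type]
        refine Finset.sum_congr rfl fun k _ => ?_
        rw [Finset.mul_sum]
        exact Finset.sum_congr rfl fun j _ => by rw [sq]

lemma key_lower {n T m : ℕ} (hm : m ≤ n) (p : Fin n → Fin T → ℝ) (ν : Fin n → ℝ)
    (hν : ∀ k, 0 < ν k)
    (hp : ∀ k l, p k ⬝ᵥ p l = if k = l then ν k else 0)
    (c : Fin n → ℝ) (hd0 : ∀ k, 0 ≤ c k * ν k)
    (hdmono : Monotone (fun k => c k * ν k))
    (Y : Matrix (Fin m) (Fin T) ℝ) :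
    ∑ k ∈ Finset.univ.filter (fun k : Fin n => ¬ (n - m ≤ (k : ℕ))), (c k * ν k)^2 ≤
    ∑ a : Fin T, ∑ b : Fin T, ((∑ k, c k * p k a * p k b) - (Yᵀ * Y) a b)^2 := by
  classical
  -- spectral decomposition of Y * Yᵀ
  have hH : (Y * Yᵀ).IsHermitian := by
    have := Matrix.isHermitian_mul_conjTranspose_self Y
    simpa using this
  set P : Matrix (Fin m) (Fin m) ℝ := (Matrix.IsHermitian.eigenvectorUnitary hH : Matrix (Fin m) (Fin m) ℝ) with hPdef
  have hstar : star P = Pᵀ := by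
    ext i j
    simp [Matrix.star_apply]
  have hP2 : P * Pᵀ = 1 := by
    rw [← hstar]
    exact (Matrix.mem_unitaryGroup_iff).mp (Matrix.IsHermitian.eigenvectorUnitary hH).2
  have hP1 : Pᵀ * P = 1 := by
    rw [← hstar]
    exact (Matrix.mem_unitaryGroup_iff').mp (Matrix.IsHermitian.eigenvectorUnitary hH).2
  set μ : Fin m → ℝ := hH.eigenvalues with hμdef
  have hspec : Y * Yᵀ = P * Matrix.diagonal μ * Pᵀ := by
    have h := hH.spectral_theorem
    rw [Unitary.conjStarAlgAut_apply, hstar] at h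
    simpa using h
  set Z : Matrix (Fin m) (Fin T) ℝ := Pᵀ * Y with hZdef
  have hZY : P * Z = Y := by rw [hZdef, ← Matrix.mul_assoc, hP2, Matrix.one_mul]
  have hZZ : Z * Zᵀ = Matrix.diagonal μ := by
    have : Z * Zᵀ = Pᵀ * (Y * Yᵀ) * P := by
      rw [hZdef, Matrix.transpose_mul, Matrix.transpose_transpose]
      simp only [Matrix.mul_assoc]
    rw [this, hspec]
    simp only [Matrix.mul_assoc]
    rw [hP1, Matrix.mul_one, ← Matrix.mul_assoc, hP1, Matrix.one_mul]
  have hYY : Yᵀ * Y = Zᵀ * Z := by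
    conv_lhs => rw [← hZY]
    rw [Matrix.transpose_mul]
    simp only [Matrix.mul_assoc]
    rw [← Matrix.mul_assoc Pᵀ P Z, hP1, Matrix.one_mul]
  set z : Fin m → Fin T → ℝ := fun j => Z j with hzdef
  have hz : ∀ j j', z j ⬝ᵥ z j' = if j = j' then μ j else 0 := by
    intro j j'
    have := congr_fun (congr_fun hZZ j) j'
    rw [Matrix.mul_apply] at this
    simp only [Matrix.diagonal_apply] at this
    simpa [Matrix.transpose_apply, dotProduct] using this
  have hμ0 : ∀ j, 0 ≤ μ j := by
    intro j
    have := hz j j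
    rw [if_pos rfl] at this
    rw [← this]
    exact Finset.sum_nonneg fun t _ => mul_self_nonneg _
  -- entrywise formula for Yᵀ * Y
  have hBent : ∀ a b, (Yᵀ * Y) a b = ∑ j, z j a * z j b := by
    intro a b
    rw [hYY, Matrix.mul_apply]
    simp [Matrix.transpose_apply, hzdef]
  set d : Fin n → ℝ := fun k => c k * ν k with hddef
  set s : Fin m → Fin n → ℝ := fun j k => (z j ⬝ᵥ p k)^2 with hsdef
  -- expansion of the objective
  have hsplit : ∑ a : Fin T, ∑ b : Fin T, ((∑ k, c k * p k a * p k b) - (Yᵀ * Y) a b)^2 =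
      (∑ k, (d k)^2) - 2 * (∑ k, c k * ∑ j, s j k) + ∑ j, (μ j)^2 := by
    have e1 : ∑ a : Fin T, ∑ b : Fin T, (∑ k, c k * p k a * p k b)^2 = ∑ k, (d k)^2 := by
      rw [frob_diag p ν hp c]
      exact Finset.sum_congr rfl fun k _ => by rw [hddef]; ring
    have e2 : ∑ a : Fin T, ∑ b : Fin T, (∑ k, c k * p k a * p k b) * (Yᵀ * Y) a b =
        ∑ k, c k * ∑ j, s j k := by
      calc ∑ a : Fin T, ∑ b : Fin T, (∑ k, c k * p k a * p k b) * (Yᵀ * Y) a b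
          = ∑ a : Fin T, ∑ b : Fin T, (∑ k, c k * p k a * p k b) * (∑ j, z j a * z j b) := by
            refine Finset.sum_congr rfl fun a _ => Finset.sum_congr rfl fun b _ => ?_
            rw [hBent]
        _ = ∑ k, c k * ∑ j, (p k ⬝ᵥ z j)^2 := frob_cross p z c
        _ = ∑ k, c k * ∑ j, s j k := by
            refine Finset.sum_congr rfl fun k _ => ?_
            congr 1
            exact Finset.sum_congr rfl fun j _ => by rw [hsdef]; simp [dotProduct_comm]
    have e3 : ∑ a : Fin T, ∑ b : Fin T, ((Yᵀ * Y) a b)^2 = ∑ j, (μ j)^2 := by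
      have : ∀ a b, (Yᵀ * Y) a b = ∑ j, (1 : ℝ) * z j a * z j b := by
        intro a b
        rw [hBent]
        exact Finset.sum_congr rfl fun j _ => by ring
      calc ∑ a : Fin T, ∑ b : Fin T, ((Yᵀ * Y) a b)^2
          = ∑ a : Fin T, ∑ b : Fin T, (∑ j, (1:ℝ) * z j a * z j b)^2 := by
            refine Finset.sum_congr rfl fun a _ => Finset.sum_congr rfl fun b _ => ?_
            rw [this]
        _ = ∑ j, ((1:ℝ))^2 * (μ j)^2 := frob_diag z μ hz 1
        _ = ∑ j, (μ j)^2 := by simp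
    calc ∑ a : Fin T, ∑ b : Fin T, ((∑ k, c k * p k a * p k b) - (Yᵀ * Y) a b)^2
        = ∑ a : Fin T, ∑ b : Fin T, ((∑ k, c k * p k a * p k b)^2
            - 2 * ((∑ k, c k * p k a * p k b) * (Yᵀ * Y) a b) + ((Yᵀ * Y) a b)^2) := by
          refine Finset.sum_congr rfl fun a _ => Finset.sum_congr rfl fun b _ => ?_
          ring
      _ = (∑ k, (d k)^2) - 2 * (∑ k, c k * ∑ j, s j k) + ∑ j, (μ j)^2 := by
          rw [← e1, ← e2, ← e3]
          simp only [Finset.sum_add_distrib, Finset.sum_sub_distrib, Finset.mul_sum]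
  -- the coefficient matrix
  set C : Fin m → Fin n → ℝ := fun j k => if μ j = 0 then 0 else s j k / (μ j * ν k) with hCdef
  have hC0 : ∀ j k, 0 ≤ C j k := by
    intro j k
    rw [hCdef]
    dsimp only
    split
    · exact le_refl 0
    · rename_i h
      have hμ : 0 < μ j := lt_of_le_of_ne (hμ0 j) (Ne.symm h)
      exact div_nonneg (sq_nonneg _) (le_of_lt (mul_pos hμ (hν k)))
  have hzero : ∀ j, μ j = 0 → ∀ k, s j k = 0 := by
    intro j hj k
    have hzz : z j ⬝ᵥ z j = 0 := by rw [hz j j, if_pos rfl, hj]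
    have : z j = 0 := dotProduct_self_eq_zero.mp hzz
    rw [hsdef]
    simp [this]
  -- row sums at most 1
  have hrow : ∀ j, ∑ k, C j k ≤ 1 := by
    intro j
    by_cases hj : μ j = 0
    · simp [hCdef, hj]
    · have hμ : 0 < μ j := lt_of_le_of_ne (hμ0 j) (Ne.symm hj)
      have hb := bessel_div p (fun k l hkl => by rw [hp k l, if_neg hkl]) (z j)
      have hb' : ∑ k, s j k / ν k ≤ μ j := by
        have heq : ∀ k : Fin n,
            (if p k ⬝ᵥ p k = 0 then (0:ℝ) else (p k ⬝ᵥ z j)^2 / (p k ⬝ᵥ p k)) = s j k / ν k := by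
          intro k
          rw [hp k k, if_pos rfl, if_neg (ne_of_gt (hν k))]
          rw [hsdef]
          simp [dotProduct_comm]
        rw [Finset.sum_congr rfl fun k _ => heq k] at hb
        calc ∑ k, s j k / ν k ≤ z j ⬝ᵥ z j := hb
          _ = μ j := by rw [hz j j, if_pos rfl]
      have : ∑ k, C j k = (∑ k, s j k / ν k) / μ j := by
        rw [Finset.sum_div]
        refine Finset.sum_congr rfl fun k _ => ?_
        rw [hCdef]
        dsimp only
        rw [if_neg hj, div_div, mul_comm (ν k) (μ j)]
      rw [this]
      rw [div_le_one hμ]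
      exact hb'
  -- column sums at most 1
  have hcol : ∀ k, ∑ j, C j k ≤ 1 := by
    intro k
    have hb := bessel_div z (fun i j hij => by rw [hz i j, if_neg hij]) (p k)
    have hb' : ∑ j, (if μ j = 0 then (0:ℝ) else s j k / μ j) ≤ ν k := by
      have heq : ∀ j : Fin m,
          (if z j ⬝ᵥ z j = 0 then (0:ℝ) else (z j ⬝ᵥ p k)^2 / (z j ⬝ᵥ z j)) =
          (if μ j = 0 then (0:ℝ) else s j k / μ j) := by
        intro j
        rw [show z j ⬝ᵥ z j = μ j by rw [hz j j, if_pos rfl], hsdef]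
      rw [Finset.sum_congr rfl fun j _ => heq j] at hb
      calc ∑ j, (if μ j = 0 then (0:ℝ) else s j k / μ j) ≤ p k ⬝ᵥ p k := hb
        _ = ν k := by rw [hp k k, if_pos rfl]
    have : ∑ j, C j k = (∑ j, (if μ j = 0 then (0:ℝ) else s j k / μ j)) / ν k := by
      rw [Finset.sum_div]
      refine Finset.sum_congr rfl fun j _ => ?_
      rw [hCdef]
      dsimp only
      split
      · simp
      · rw [div_div]
    rw [this, div_le_one (hν k)]
    exact hb'
  -- per-row inequality
  have hper : ∀ j, 2 * (∑ k, c k * s j k) - (μ j)^2 ≤ ∑ k, (d k)^2 * C j k := by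
    intro j
    by_cases hj : μ j = 0
    · have h1 : ∑ k, c k * s j k = 0 := Finset.sum_eq_zero fun k _ => by
        rw [hzero j hj k, mul_zero]
      have h2 : ∑ k, (d k)^2 * C j k = 0 := Finset.sum_eq_zero fun k _ => by
        rw [hCdef]; simp [hj]
      rw [h1, h2, hj]
      norm_num
    · have hμ : 0 < μ j := lt_of_le_of_ne (hμ0 j) (Ne.symm hj)
      set a : ℝ := ∑ k, d k * C j k with hadef
      have ha : ∑ k, c k * s j k = μ j * a := by
        rw [hadef, Finset.mul_sum]
        refine Finset.sum_congr rfl fun k _ => ?_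
        rw [hCdef, hddef]
        dsimp only
        rw [if_neg hj]
        have hν' : ν k ≠ 0 := ne_of_gt (hν k)
        field_simp
      have hCS : a^2 ≤ ∑ k, (d k)^2 * C j k := by
        have h1 : a = ∑ k, Real.sqrt (C j k) * (d k * Real.sqrt (C j k)) := by
          rw [hadef]
          refine Finset.sum_congr rfl fun k _ => ?_
          have hs : Real.sqrt (C j k) * Real.sqrt (C j k) = C j k :=
            Real.mul_self_sqrt (hC0 j k)
          calc d k * C j k = d k * (Real.sqrt (C j k) * Real.sqrt (C j k)) := by rw [hs]
            _ = Real.sqrt (C j k) * (d k * Real.sqrt (C j k)) := by ring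
        have h2 := Finset.sum_mul_sq_le_sq_mul_sq Finset.univ
          (fun k => Real.sqrt (C j k)) (fun k => d k * Real.sqrt (C j k))
        have h3 : ∑ k, (Real.sqrt (C j k))^2 = ∑ k, C j k :=
          Finset.sum_congr rfl fun k _ => Real.sq_sqrt (hC0 j k)
        have h4 : ∑ k, (d k * Real.sqrt (C j k))^2 = ∑ k, (d k)^2 * C j k := by
          refine Finset.sum_congr rfl fun k _ => ?_
          rw [mul_pow, Real.sq_sqrt (hC0 j k)]
        have h5 : 0 ≤ ∑ k, (d k)^2 * C j k :=
          Finset.sum_nonneg fun k _ => mul_nonneg (sq_nonneg _) (hC0 j k)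
        calc a^2 = (∑ k, Real.sqrt (C j k) * (d k * Real.sqrt (C j k)))^2 := by rw [h1]
          _ ≤ (∑ k, (Real.sqrt (C j k))^2) * (∑ k, (d k * Real.sqrt (C j k))^2) := h2
          _ = (∑ k, C j k) * (∑ k, (d k)^2 * C j k) := by rw [h3, h4]
          _ ≤ 1 * (∑ k, (d k)^2 * C j k) := by
              exact mul_le_mul_of_nonneg_right (hrow j) h5
          _ = ∑ k, (d k)^2 * C j k := one_mul _
      calc 2 * (∑ k, c k * s j k) - (μ j)^2 = 2 * (μ j * a) - (μ j)^2 := by rw [ha]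
        _ ≤ a^2 := by nlinarith [sq_nonneg (μ j - a)]
        _ ≤ ∑ k, (d k)^2 * C j k := hCS
  -- assemble
  set e : Fin n → ℝ := fun k => ∑ j, C j k with hedef
  have he0 : ∀ k, 0 ≤ e k := fun k => Finset.sum_nonneg fun j _ => hC0 j k
  have he1 : ∀ k, e k ≤ 1 := hcol
  have hesum : ∑ k, e k ≤ (m : ℝ) := by
    calc ∑ k, e k = ∑ j, ∑ k, C j k := Finset.sum_comm
      _ ≤ ∑ j : Fin m, (1:ℝ) := Finset.sum_le_sum fun j _ => hrow j
      _ = (m : ℝ) := by simp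
  have hw0 : ∀ k, 0 ≤ (d k)^2 := fun k => sq_nonneg _
  have hwmono : Monotone (fun k => (d k)^2) := by
    intro k l hkl
    dsimp only
    exact pow_le_pow_left₀ (hd0 k) (hdmono hkl) 2
  have hlp := lp_bound hm (fun k => (d k)^2) e hw0 hwmono he0 he1 hesum
  have hmid : ∑ j, (2 * (∑ k, c k * s j k) - (μ j)^2) ≤
      ∑ k ∈ Finset.univ.filter (fun k : Fin n => n - m ≤ (k : ℕ)), (d k)^2 := by
    calc ∑ j, (2 * (∑ k, c k * s j k) - (μ j)^2) ≤ ∑ j, ∑ k, (d k)^2 * C j k :=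
          Finset.sum_le_sum fun j _ => hper j
      _ = ∑ k, ∑ j, (d k)^2 * C j k := Finset.sum_comm
      _ = ∑ k, (d k)^2 * e k := by
          refine Finset.sum_congr rfl fun k _ => ?_
          rw [hedef, Finset.mul_sum]
      _ ≤ ∑ k ∈ Finset.univ.filter (fun k : Fin n => n - m ≤ (k : ℕ)), (d k)^2 := hlp
  have htotal : ∑ k, (d k)^2 =
      ∑ k ∈ Finset.univ.filter (fun k : Fin n => n - m ≤ (k : ℕ)), (d k)^2 +
      ∑ k ∈ Finset.univ.filter (fun k : Fin n => ¬ (n - m ≤ (k : ℕ))), (d k)^2 :=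
    (Finset.sum_filter_add_sum_filter_not _ _ _).symm
  have hexp : ∑ j, (2 * (∑ k, c k * s j k) - (μ j)^2) =
      2 * (∑ k, c k * ∑ j, s j k) - ∑ j, (μ j)^2 := by
    rw [Finset.sum_sub_distrib]
    congr 1
    rw [← Finset.mul_sum]
    congr 1
    rw [Finset.sum_comm]
    exact Finset.sum_congr rfl fun k _ => (Finset.mul_sum _ _ _).symm
  rw [hsplit]
  have goal1 : ∑ k ∈ Finset.univ.filter (fun k : Fin n => ¬ (n - m ≤ (k : ℕ))), (c k * ν k)^2 =
      ∑ k ∈ Finset.univ.filter (fun k : Fin n => ¬ (n - m ≤ (k : ℕ))), (d k)^2 := rfl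
  rw [goal1]
  rw [hexp] at hmid
  linarith [hmid, htotal]

lemma tdm_apply {n T : ℕ} (M : Matrix (Fin n) (Fin T) ℝ) (g : Fin n → ℝ) (a b : Fin T) :
    (Mᵀ * Matrix.diagonal g * M) a b = ∑ k, g k * M k a * M k b := by
  rw [Matrix.mul_apply]
  refine Finset.sum_congr rfl fun k _ => ?_
  rw [Matrix.mul_diagonal, Matrix.transpose_apply]
  ring

lemma sum_kappa {n m : ℕ} (hm : m ≤ n) (κ : Fin m → Fin n)
    (hκ : ∀ i, (κ i : ℕ) = n - m + (i : ℕ)) (F : Fin n → ℝ) :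
    ∑ i : Fin m, F (κ i) =
      ∑ k ∈ Finset.univ.filter (fun k : Fin n => n - m ≤ (k : ℕ)), F k := by
  classical
  refine Finset.sum_bij' (fun i _ => κ i)
    (fun k hk => (⟨(k : ℕ) - (n - m), by
      have hk' := (Finset.mem_filter.mp hk).2
      have := k.isLt
      omega⟩ : Fin m)) ?_ ?_ ?_ ?_ ?_
  · intro i _
    refine Finset.mem_filter.mpr ⟨Finset.mem_univ _, ?_⟩
    rw [hκ]
    omega
  · intro k hk
    exact Finset.mem_univ _
  · intro i _
    apply Fin.ext
    simp only []
    rw [hκ]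
    omega
  · intro k hk
    have hk' := (Finset.mem_filter.mp hk).2
    apply Fin.ext
    rw [hκ]
    simp only []
    omega
  · intro i _
    rfl

theorem stmt_8 (n T m : ℕ) (hT : n < T) (hm : m ≤ n)
    (X : Matrix (Fin n) (Fin T) ℝ)
    (Cx : Matrix (Fin n) (Fin n) ℝ) (hCx : Cx = (T : ℝ)⁻¹ • (X * Xᵀ))
    (hinv : IsUnit Cx.det)
    -- eigen-decomposition of Cx with simple (distinct) spectrum
    (V : Matrix (Fin n) (Fin n) ℝ) (hV : Vᵀ * V = 1)
    (lam : Fin n → ℝ) (hlam_distinct : StrictAnti lam) (hlam_pos : ∀ i, 0 < lam i)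
    (hdecomp : Cx = V * Matrix.diagonal lam * Vᵀ)
    -- σT exceeds the top eigenvalue of XᵀX
    (σ : ℝ)
    (hσ : ∀ (c : ℝ) (v : Fin T → ℝ), v ≠ 0 → (Xᵀ * X) *ᵥ v = c • v → c < σ * T)
    -- W has rows forming a suitably scaled basis of the minor subspace of Cx
    (W : Matrix (Fin m) (Fin n) ℝ)
    (hW : ∀ (i : Fin m) (j : Fin n),
      W i j = Real.sqrt ((σ - lam ⟨n - m + i, by omega⟩) / lam ⟨n - m + i, by omega⟩) * V j ⟨n - m + i, by omega⟩) :
    ∀ Y : Matrix (Fin m) (Fin T) ℝ,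
      (∑ a : Fin T, ∑ b : Fin T,
        ((σ • (Xᵀ * Cx⁻¹ * X) - Xᵀ * X) a b - ((W * X)ᵀ * (W * X)) a b) ^ 2) ≤
      (∑ a : Fin T, ∑ b : Fin T,
        ((σ • (Xᵀ * Cx⁻¹ * X) - Xᵀ * X) a b - (Yᵀ * Y) a b) ^ 2) := by
  classical
  intro Y
  have hTn : 0 < T := by omega
  have hT0 : (0:ℝ) < (T:ℝ) := by exact_mod_cast hTn
  have hTne : (T:ℝ) ≠ 0 := ne_of_gt hT0
  have hlamne : ∀ k, lam k ≠ 0 := fun k => ne_of_gt (hlam_pos k)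
  have hVVT : V * Vᵀ = 1 := mul_eq_one_comm.mp hV
  have hsand : ∀ D : Matrix (Fin n) (Fin n) ℝ, Vᵀ * (V * D * Vᵀ) * V = D := by
    intro D
    calc Vᵀ * (V * D * Vᵀ) * V = (Vᵀ * V) * D * (Vᵀ * V) := by
          simp only [Matrix.mul_assoc]
      _ = D := by rw [hV, Matrix.one_mul, Matrix.mul_one]
  set M : Matrix (Fin n) (Fin T) ℝ := Vᵀ * X with hMdef
  have hXVM : X = V * M := by rw [hMdef, ← Matrix.mul_assoc, hVVT, Matrix.one_mul]
  have hXXT : X * Xᵀ = (T:ℝ) • Cx := by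
    rw [hCx, smul_smul, mul_inv_cancel₀ hTne, one_smul]
  set ν : Fin n → ℝ := fun k => (T:ℝ) * lam k with hνdef
  have hν : ∀ k, 0 < ν k := fun k => mul_pos hT0 (hlam_pos k)
  have hMMT : M * Mᵀ = Matrix.diagonal ν := by
    rw [hMdef, Matrix.transpose_mul, Matrix.transpose_transpose]
    calc Vᵀ * X * (Xᵀ * V)
        = Vᵀ * (X * Xᵀ) * V := by simp only [Matrix.mul_assoc]
      _ = Vᵀ * ((T:ℝ) • Cx) * V := by rw [hXXT]
      _ = (T:ℝ) • (Vᵀ * Cx * V) := by rw [Matrix.mul_smul, Matrix.smul_mul]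
      _ = (T:ℝ) • Matrix.diagonal lam := by
          rw [show Vᵀ * Cx * V = Vᵀ * (V * Matrix.diagonal lam * Vᵀ) * V from by rw [← hdecomp],
            hsand]
      _ = Matrix.diagonal ν := by
          ext k l
          simp only [Matrix.smul_apply, Matrix.diagonal_apply, hνdef, smul_eq_mul]
          split <;> simp
  have hp : ∀ k l, M k ⬝ᵥ M l = if k = l then ν k else 0 := by
    intro k l
    have h := congr_fun (congr_fun hMMT k) l
    rw [Matrix.mul_apply] at h
    simpa [Matrix.diagonal_apply, Matrix.transpose_apply, dotProduct] using h
  -- inverse of Cx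
  have hCxi : Cx⁻¹ = V * Matrix.diagonal (fun k => (lam k)⁻¹) * Vᵀ := by
    apply Matrix.inv_eq_right_inv
    rw [hdecomp]
    calc V * Matrix.diagonal lam * Vᵀ * (V * Matrix.diagonal (fun k => (lam k)⁻¹) * Vᵀ)
        = V * (Matrix.diagonal lam * ((Vᵀ * V) * (Matrix.diagonal (fun k => (lam k)⁻¹) * Vᵀ))) := by
          simp only [Matrix.mul_assoc]
      _ = V * ((Matrix.diagonal lam * Matrix.diagonal (fun k => (lam k)⁻¹)) * Vᵀ) := by
          rw [hV, Matrix.one_mul, Matrix.mul_assoc]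
      _ = V * (1 * Vᵀ) := by
          rw [Matrix.diagonal_mul_diagonal,
            show (fun k => lam k * (lam k)⁻¹) = fun _ : Fin n => (1:ℝ) from
              funext fun k => mul_inv_cancel₀ (hlamne k),
            Matrix.diagonal_one]
      _ = 1 := by rw [Matrix.one_mul, hVVT]
  -- entrywise formula for the target matrix
  set c : Fin n → ℝ := fun k => (σ - lam k) / lam k with hcdef
  have h1 : Xᵀ * Cx⁻¹ * X = Mᵀ * Matrix.diagonal (fun k => (lam k)⁻¹) * M := by
    rw [hCxi]
    conv_lhs => rw [hXVM]
    rw [Matrix.transpose_mul]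
    calc Mᵀ * Vᵀ * (V * Matrix.diagonal (fun k => (lam k)⁻¹) * Vᵀ) * (V * M)
        = Mᵀ * ((Vᵀ * V) * (Matrix.diagonal (fun k => (lam k)⁻¹) * ((Vᵀ * V) * M))) := by
          simp only [Matrix.mul_assoc]
      _ = Mᵀ * (Matrix.diagonal (fun k => (lam k)⁻¹) * M) := by
          rw [hV, Matrix.one_mul, Matrix.one_mul]
      _ = Mᵀ * Matrix.diagonal (fun k => (lam k)⁻¹) * M := by rw [Matrix.mul_assoc]
  have h2 : Xᵀ * X = Mᵀ * M := by
    conv_lhs => rw [hXVM]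
    rw [Matrix.transpose_mul]
    calc Mᵀ * Vᵀ * (V * M) = Mᵀ * ((Vᵀ * V) * M) := by simp only [Matrix.mul_assoc]
      _ = Mᵀ * M := by rw [hV, Matrix.one_mul]
  have hAeq : ∀ a b, (σ • (Xᵀ * Cx⁻¹ * X) - Xᵀ * X) a b = ∑ k, c k * M k a * M k b := by
    intro a b
    rw [Matrix.sub_apply, Matrix.smul_apply, h1, h2, tdm_apply, smul_eq_mul]
    have hMM : (Mᵀ * M) a b = ∑ k, M k a * M k b := by
      rw [Matrix.mul_apply]
      exact Finset.sum_congr rfl fun k _ => by rw [Matrix.transpose_apply]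
    rw [hMM, Finset.mul_sum, ← Finset.sum_sub_distrib]
    refine Finset.sum_congr rfl fun k _ => ?_
    simp only [hcdef]
    field_simp [hlamne k]
  -- all eigenvalues are below σ
  have hσlam : ∀ k, lam k < σ := by
    intro k
    set v : Fin n → ℝ := fun j => V j k with hvdef
    have hVcol : ∀ r, (∑ l, V l r * V l k) = if r = k then 1 else 0 := by
      intro r
      have h := congr_fun (congr_fun hV r) k
      rw [Matrix.mul_apply] at h
      simpa [Matrix.transpose_apply, Matrix.one_apply] using h
    have hvv : v ⬝ᵥ v = 1 := by
      have := hVcol k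
      simpa [dotProduct, hvdef] using this
    have hCv : Cx *ᵥ v = lam k • v := by
      have hent : ∀ j l, Cx j l = ∑ r, lam r * V j r * V l r := by
        intro j l
        rw [hdecomp, Matrix.mul_apply]
        refine Finset.sum_congr rfl fun r _ => ?_
        rw [Matrix.mul_diagonal, Matrix.transpose_apply]
        ring
      funext j
      have lhs1 : (Cx *ᵥ v) j = ∑ l, Cx j l * V l k := by
        simp [Matrix.mulVec, dotProduct, hvdef]
      rw [lhs1]
      calc ∑ l, Cx j l * V l k = ∑ l, ∑ r, (lam r * V j r * V l r) * V l k := by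
            refine Finset.sum_congr rfl fun l _ => ?_
            rw [hent j l, Finset.sum_mul]
        _ = ∑ r, ∑ l, (lam r * V j r * V l r) * V l k := Finset.sum_comm
        _ = ∑ r, lam r * V j r * (∑ l, V l r * V l k) := by
            refine Finset.sum_congr rfl fun r _ => ?_
            rw [Finset.mul_sum]
            exact Finset.sum_congr rfl fun l _ => by ring
        _ = lam k * V j k := by
            simp only [hVcol, mul_ite, mul_one, mul_zero]
            simp
        _ = (lam k • v) j := by simp [hvdef]
    have hu2 : (Xᵀ *ᵥ v) ⬝ᵥ (Xᵀ *ᵥ v) = (T:ℝ) * lam k := by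
      rw [Matrix.dotProduct_mulVec, Matrix.vecMul_transpose, Matrix.mulVec_mulVec, hXXT,
        Matrix.smul_mulVec, hCv]
      simp [smul_dotProduct, hvv, smul_eq_mul]
    have hune : Xᵀ *ᵥ v ≠ 0 := by
      intro h0
      rw [h0] at hu2
      simp only [zero_dotProduct] at hu2
      have := mul_pos hT0 (hlam_pos k)
      linarith
    have hXu : (Xᵀ * X) *ᵥ (Xᵀ *ᵥ v) = ((T:ℝ) * lam k) • (Xᵀ *ᵥ v) := by
      calc (Xᵀ * X) *ᵥ (Xᵀ *ᵥ v) = ((Xᵀ * X) * Xᵀ) *ᵥ v := by rw [Matrix.mulVec_mulVec]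
        _ = (Xᵀ * (X * Xᵀ)) *ᵥ v := by rw [Matrix.mul_assoc]
        _ = Xᵀ *ᵥ ((X * Xᵀ) *ᵥ v) := by rw [← Matrix.mulVec_mulVec]
        _ = Xᵀ *ᵥ (((T:ℝ) • Cx) *ᵥ v) := by rw [hXXT]
        _ = Xᵀ *ᵥ ((T:ℝ) • (Cx *ᵥ v)) := by rw [Matrix.smul_mulVec]
        _ = Xᵀ *ᵥ ((T:ℝ) • (lam k • v)) := by rw [hCv]
        _ = ((T:ℝ) * lam k) • (Xᵀ *ᵥ v) := by rw [smul_smul, Matrix.mulVec_smul]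
    have hlt := hσ ((T:ℝ) * lam k) (Xᵀ *ᵥ v) hune hXu
    have hlt' : lam k * (T:ℝ) < σ * (T:ℝ) := by
      linarith [mul_comm (T:ℝ) (lam k)]
    exact lt_of_mul_lt_mul_right hlt' (le_of_lt hT0)
  -- properties of d
  have hd : ∀ k, c k * ν k = (T:ℝ) * (σ - lam k) := by
    intro k
    simp only [hcdef, hνdef]
    field_simp [hlamne k]
  have hd0 : ∀ k, 0 ≤ c k * ν k := by
    intro k
    rw [hd k]
    have := hσlam k
    have h2 : 0 ≤ σ - lam k := by linarith
    positivity
  have hdmono : Monotone (fun k => c k * ν k) := by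
    intro k l hkl
    dsimp only
    rw [hd k, hd l]
    have : lam l ≤ lam k := hlam_distinct.antitone hkl
    have h2 : σ - lam k ≤ σ - lam l := by linarith
    exact mul_le_mul_of_nonneg_left h2 (le_of_lt hT0)
  -- the matrix W * X
  set κ : Fin m → Fin n := fun i => ⟨n - m + (i:ℕ), by have := i.isLt; omega⟩ with hκdef
  have hκval : ∀ i, (κ i : ℕ) = n - m + (i:ℕ) := fun i => rfl
  have hcκ : ∀ i, 0 ≤ c (κ i) := by
    intro i
    simp only [hcdef]
    have h1 := hσlam (κ i)
    have h2 := hlam_pos (κ i)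
    apply div_nonneg <;> linarith
  have hWX : ∀ (i : Fin m) (t : Fin T), (W * X) i t = Real.sqrt (c (κ i)) * M (κ i) t := by
    intro i t
    rw [Matrix.mul_apply]
    have hterm : ∀ j, W i j * X j t = Real.sqrt (c (κ i)) * (V j (κ i) * X j t) := by
      intro j
      rw [hW i j]
      simp only [hcdef, hκdef]
      ring
    rw [Finset.sum_congr rfl fun j _ => hterm j, ← Finset.mul_sum]
    congr 1
  have hB0 : ∀ a b, ((W * X)ᵀ * (W * X)) a b = ∑ i, c (κ i) * M (κ i) a * M (κ i) b := by
    intro a b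
    rw [Matrix.mul_apply]
    refine Finset.sum_congr rfl fun i _ => ?_
    rw [Matrix.transpose_apply, hWX i a, hWX i b]
    have hss : Real.sqrt (c (κ i)) * Real.sqrt (c (κ i)) = c (κ i) :=
      Real.mul_self_sqrt (hcκ i)
    calc Real.sqrt (c (κ i)) * M (κ i) a * (Real.sqrt (c (κ i)) * M (κ i) b)
        = (Real.sqrt (c (κ i)) * Real.sqrt (c (κ i))) * (M (κ i) a * M (κ i) b) := by ring
      _ = c (κ i) * M (κ i) a * M (κ i) b := by rw [hss]; ring
  -- rewrite the left-hand side
  set c2 : Fin n → ℝ := fun k => if n - m ≤ (k:ℕ) then 0 else c k with hc2def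
  have hdiff : ∀ a b, (σ • (Xᵀ * Cx⁻¹ * X) - Xᵀ * X) a b - ((W * X)ᵀ * (W * X)) a b
      = ∑ k, c2 k * M k a * M k b := by
    intro a b
    rw [hAeq a b, hB0 a b]
    rw [sum_kappa hm κ hκval (fun k => c k * M k a * M k b)]
    have hsplit := Finset.sum_filter_add_sum_filter_not Finset.univ
      (fun k : Fin n => n - m ≤ (k:ℕ)) (fun k => c k * M k a * M k b)
    have hc2sum : ∑ k, c2 k * M k a * M k b =
        ∑ k ∈ Finset.univ.filter (fun k : Fin n => ¬ (n - m ≤ (k:ℕ))), c k * M k a * M k b := by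
      rw [Finset.sum_filter]
      refine Finset.sum_congr rfl fun k _ => ?_
      simp only [hc2def]
      by_cases hk : n - m ≤ (k:ℕ)
      · simp [hk]
      · simp [hk]
    rw [hc2sum]
    linarith [hsplit]
  have hLHS : ∑ a : Fin T, ∑ b : Fin T,
      ((σ • (Xᵀ * Cx⁻¹ * X) - Xᵀ * X) a b - ((W * X)ᵀ * (W * X)) a b)^2
      = ∑ k ∈ Finset.univ.filter (fun k : Fin n => ¬ (n - m ≤ (k:ℕ))), (c k * ν k)^2 := by
    calc ∑ a : Fin T, ∑ b : Fin T,
        ((σ • (Xᵀ * Cx⁻¹ * X) - Xᵀ * X) a b - ((W * X)ᵀ * (W * X)) a b)^2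
        = ∑ a : Fin T, ∑ b : Fin T, (∑ k, c2 k * M k a * M k b)^2 := by
          exact Finset.sum_congr rfl fun a _ => Finset.sum_congr rfl fun b _ => by
            rw [hdiff a b]
      _ = ∑ k, (c2 k)^2 * (ν k)^2 := frob_diag (fun k => M k) ν hp c2
      _ = ∑ k ∈ Finset.univ.filter (fun k : Fin n => ¬ (n - m ≤ (k:ℕ))), (c k * ν k)^2 := by
          rw [Finset.sum_filter]
          refine Finset.sum_congr rfl fun k _ => ?_
          simp only [hc2def]
          by_cases hk : n - m ≤ (k:ℕ)
          · simp [hk]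
          · simp [hk]
            ring
  rw [hLHS]
  have hRHS : ∑ a : Fin T, ∑ b : Fin T,
      ((σ • (Xᵀ * Cx⁻¹ * X) - Xᵀ * X) a b - (Yᵀ * Y) a b)^2
      = ∑ a : Fin T, ∑ b : Fin T, ((∑ k, c k * M k a * M k b) - (Yᵀ * Y) a b)^2 := by
    exact Finset.sum_congr rfl fun a _ => Finset.sum_congr rfl fun b _ => by rw [hAeq a b]
  rw [hRHS]
  exact key_lower hm (fun k => M k) ν hν hp c hd0 hdmono Y
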